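/- Let A_1, A_2, B_1, B_2 be operators on a Hilbert space with A_j² = I, B_k² = I, A_j = A_j†, B_k = B_k†, and [A_j, B_k] = 0 for all j, k ∈ {1,2}. With h_1 = A_1 + A_2 − √2·B_1 and h_2 = A_1 − A_2 − √2·B_2, the identity 2√2·I − (A_1B_1 + A_1B_2 + A_2B_1 − A_2B_2) = (1/(2√2))(h_1†h_1 + h_2†h_2) holds. -/
import Mathlib


/-- The explicit weighted sum-of-squares identity certifying the CHSH/Tsirelson bound:
`2√2·I − (A₁B₁ + A₁B₂ + A₂B₁ − A₂B₂) = (1/(2√2))(h₁†h₁ + h₂†h₂)` with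
`h₁ = A₁ + A₂ − √2·B₁` and `h₂ = A₁ − A₂ − √2·B₂`. -/
theorem chsh_sos_identity {H : Type*} [NormedAddCommGroup H]
    [InnerProductSpace ℂ H] [CompleteSpace H]
    (A B : Fin 2 → H →L[ℂ] H)
    (hA : ∀ j, IsSelfAdjoint (A j)) (hB : ∀ k, IsSelfAdjoint (B k))
    (hA2 : ∀ j, A j * A j = 1) (hB2 : ∀ k, B k * B k = 1)
    (hcomm : ∀ j k, A j * B k = B k * A j)
    (h₁ h₂ : H →L[ℂ] H)
    (hh₁ : h₁ = A 0 + A 1 - ((Real.sqrt 2 : ℝ) : ℂ) • B 0)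
    (hh₂ : h₂ = A 0 - A 1 - ((Real.sqrt 2 : ℝ) : ℂ) • B 1) :
    ((2 * Real.sqrt 2 : ℝ) : ℂ) • (1 : H →L[ℂ] H)
        - (A 0 * B 0 + A 0 * B 1 + A 1 * B 0 - A 1 * B 1)
      = ((1 / (2 * Real.sqrt 2) : ℝ) : ℂ) •
          (ContinuousLinearMap.adjoint h₁ * h₁ + ContinuousLinearMap.adjoint h₂ * h₂) := by
  have hsc : IsSelfAdjoint ((Real.sqrt 2 : ℝ) : ℂ) := by
    simp [IsSelfAdjoint, Complex.star_def, Complex.conj_ofReal]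
  have hsa1 : IsSelfAdjoint h₁ := by
    rw [hh₁]; exact ((hA 0).add (hA 1)).sub (hsc.smul (hB 0))
  have hsa2 : IsSelfAdjoint h₂ := by
    rw [hh₂]; exact ((hA 0).sub (hA 1)).sub (hsc.smul (hB 1))
  have ha1 : ContinuousLinearMap.adjoint h₁ = h₁ := by
    rw [← ContinuousLinearMap.star_eq_adjoint]; exact hsa1
  have ha2 : ContinuousLinearMap.adjoint h₂ = h₂ := by
    rw [← ContinuousLinearMap.star_eq_adjoint]; exact hsa2
  rw [ha1, ha2, hh₁, hh₂]
  have hs2 : ((Real.sqrt 2 : ℝ) : ℂ) * ((Real.sqrt 2 : ℝ) : ℂ) = 2 := by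
    rw [← Complex.ofReal_mul, Real.mul_self_sqrt (by norm_num)]; norm_num
  simp only [sub_mul, mul_sub, add_mul, mul_add, smul_mul_assoc, mul_smul_comm, smul_smul,
    hA2, hB2, ← hcomm]
  push_cast
  have hne : ((Real.sqrt 2 : ℝ) : ℂ) ≠ 0 := by
    simpa using Real.sqrt_pos.mpr (by norm_num : (0:ℝ) < 2) |>.ne'
  match_scalars
  all_goals field_simp
  all_goals try ring
  all_goals linear_combination (2 : ℂ) * hs2
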